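/- There exists a finite deterministic MDP, a starting state, and a set of constituent policies such that for all horizons H ≥ 3, every max-following policy obtains cumulative reward at most ε < 1 while the optimal policy obtains cumulative reward H − 2; hence the gap between max-following and optimal can be made arbitrarily large. -/

import Mathlib

/-- Value function of a policy in a deterministic finite-horizon MDP with transition
function `next` and reward `R`. -/
def dval {S A : Type} (next : S → A → S) (R : S → A → ℝ)
    (H : ℕ) (π : ℕ → S → A) : ℕ → S → ℝ
  | h, s =>
    if h < H then R s (π h s) + dval next R H π (h + 1) (next s (π h s))
    else 0
termination_by h _ => H - h
decreasing_by omega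

inductive St | s0 | s1 | s2 | s3 | s4
deriving DecidableEq

instance : Fintype St := ⟨{.s0, .s1, .s2, .s3, .s4}, fun x => by cases x <;> simp⟩

inductive Ac | right | left | up
deriving DecidableEq

instance : Fintype Ac := ⟨{.right, .left, .up}, fun x => by cases x <;> simp⟩

def nxt : St → Ac → St
  | .s0, .right => .s1
  | .s0, _ => .s0
  | .s1, .left => .s0
  | .s1, .up => .s4
  | .s1, .right => .s1
  | .s2, .left => .s1
  | .s2, .right => .s3
  | .s2, .up => .s2
  | .s3, _ => .s3
  | .s4, _ => .s4

noncomputable def rew (ε : ℝ) : St → Ac → ℝ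
  | .s2, .right => ε
  | .s4, _ => 1
  | _, _ => 0

def act (k : Fin 3) : Ac :=
  if k.val = 0 then .right else if k.val = 1 then .left else .up

lemma dval_s3 (ε : ℝ) (H : ℕ) (π : ℕ → St → Ac) :
    ∀ n h, H - h ≤ n → dval nxt (rew ε) H π h St.s3 = 0 := by
  intro n
  induction n with
  | zero =>
    intro h hh
    rw [dval]
    have : ¬ h < H := by omega
    simp [this]
  | succ n ih =>
    intro h hh
    rw [dval]
    by_cases hlt : h < H
    · have hr : rew ε St.s3 (π h St.s3) = 0 := by cases π h St.s3 <;> rfl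
      have hn : nxt St.s3 (π h St.s3) = St.s3 := by cases π h St.s3 <;> rfl
      rw [if_pos hlt, hr, hn, ih (h + 1) (by omega)]; ring
    · simp [hlt]

lemma dval_s4 (ε : ℝ) (H : ℕ) (π : ℕ → St → Ac) :
    ∀ n h, H - h ≤ n → h ≤ H → dval nxt (rew ε) H π h St.s4 = (H : ℝ) - h := by
  intro n
  induction n with
  | zero =>
    intro h hh hle
    have : h = H := by omega
    subst this
    rw [dval]
    simp
  | succ n ih =>
    intro h hh hle
    by_cases hlt : h < H
    · rw [dval, if_pos hlt]
      have hr : rew ε St.s4 (π h St.s4) = 1 := by cases π h St.s4 <;> rfl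
      have hn : nxt St.s4 (π h St.s4) = St.s4 := by cases π h St.s4 <;> rfl
      rw [hr, hn, ih (h + 1) (by omega) (by omega)]
      push_cast; ring
    · have : h = H := by omega
      subst this
      rw [dval]; simp

lemma dval_left_s0 (ε : ℝ) (H : ℕ) :
    ∀ n h, H - h ≤ n → dval nxt (rew ε) H (fun _ _ => Ac.left) h St.s0 = 0 := by
  intro n
  induction n with
  | zero =>
    intro h hh
    rw [dval]
    have : ¬ h < H := by omega
    simp [this]
  | succ n ih =>
    intro h hh
    rw [dval]
    by_cases hlt : h < H
    · rw [if_pos hlt]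
      show rew ε St.s0 Ac.left + dval nxt (rew ε) H _ (h+1) (nxt St.s0 Ac.left) = 0
      rw [show nxt St.s0 Ac.left = St.s0 from rfl, ih (h+1) (by omega)]
      show (0 : ℝ) + 0 = 0
      ring
    · simp [hlt]

lemma dval_left_s2 (ε : ℝ) (H : ℕ) (h : ℕ) :
    dval nxt (rew ε) H (fun _ _ => Ac.left) h St.s2 = 0 := by
  rw [dval]
  by_cases hlt : h < H
  · rw [if_pos hlt]
    show rew ε St.s2 Ac.left + dval nxt (rew ε) H _ (h+1) (nxt St.s2 Ac.left) = 0
    rw [show nxt St.s2 Ac.left = St.s1 from rfl, dval]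
    by_cases hlt2 : h + 1 < H
    · rw [if_pos hlt2]
      show rew ε St.s2 Ac.left + (rew ε St.s1 Ac.left +
        dval nxt (rew ε) H _ (h+2) (nxt St.s1 Ac.left)) = 0
      rw [show nxt St.s1 Ac.left = St.s0 from rfl,
        dval_left_s0 ε H (H - (h+2)) (h+2) le_rfl]
      show (0 : ℝ) + (0 + 0) = 0; ring
    · rw [if_neg hlt2]
      show rew ε St.s2 Ac.left + 0 = 0
      show (0:ℝ) + 0 = 0; ring
  · simp [hlt]

lemma dval_up_s2 (ε : ℝ) (H : ℕ) :
    ∀ n h, H - h ≤ n → dval nxt (rew ε) H (fun _ _ => Ac.up) h St.s2 = 0 := by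
  intro n
  induction n with
  | zero =>
    intro h hh
    rw [dval]
    have : ¬ h < H := by omega
    simp [this]
  | succ n ih =>
    intro h hh
    rw [dval]
    by_cases hlt : h < H
    · rw [if_pos hlt]
      show rew ε St.s2 Ac.up + dval nxt (rew ε) H _ (h+1) (nxt St.s2 Ac.up) = 0
      rw [show nxt St.s2 Ac.up = St.s2 from rfl, ih (h+1) (by omega)]
      show (0:ℝ) + 0 = 0; ring
    · simp [hlt]

lemma dval_right_s2 (ε : ℝ) (H : ℕ) (h : ℕ) (hlt : h < H) :
    dval nxt (rew ε) H (fun _ _ => Ac.right) h St.s2 = ε := by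
  rw [dval, if_pos hlt]
  show rew ε St.s2 Ac.right + dval nxt (rew ε) H _ (h+1) (nxt St.s2 Ac.right) = ε
  rw [show nxt St.s2 Ac.right = St.s3 from rfl,
    dval_s3 ε H _ (H - (h+1)) (h+1) le_rfl]
  show ε + 0 = ε; ring

/-- for any `0 < ε < 1` there is a finite deterministic MDP (with rewards
in `[0,1]`), a starting state, and constituent policies such that for all horizons
`H ≥ 3`, every max-following policy obtains cumulative reward at most `ε`, while some
(optimal) policy obtains cumulative reward `H − 2`. -/
theorem max_following_vs_optimal_gap (ε : ℝ) (hε0 : 0 < ε) (hε1 : ε < 1) :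
    ∃ (S A : Type) (_ : Fintype S) (_ : Fintype A)
      (next : S → A → S) (R : S → A → ℝ) (K : ℕ)
      (πc : Fin K → ℕ → S → A) (s0 : S),
      (∀ s a, 0 ≤ R s a ∧ R s a ≤ 1) ∧
      ∀ H : ℕ, 3 ≤ H →
        (∀ π : ℕ → S → A,
          (∀ h, h < H → ∀ s, ∃ k : Fin K, π h s = πc k h s ∧
            ∀ k' : Fin K, dval next R H (πc k') h s ≤ dval next R H (πc k) h s) →
          dval next R H π 0 s0 ≤ ε) ∧
        (∃ π : ℕ → S → A, dval next R H π 0 s0 = (H : ℝ) - 2) := by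
  refine ⟨St, Ac, inferInstance, inferInstance, nxt, rew ε, 3,
    fun k _ _ => act k, St.s2, ?_, ?_⟩
  · intro s a
    cases s <;> cases a <;>
      simp [rew] <;> constructor <;> linarith
  · intro H hH
    constructor
    · intro π hπ
      obtain ⟨k, hk, hmax⟩ := hπ 0 (by omega) St.s2
      have hact : π 0 St.s2 = Ac.right := by
        fin_cases k
        · rw [hk]; rfl
        · exfalso
          have habs : ε ≤ (0 : ℝ) := by
            calc ε = dval nxt (rew ε) H (fun _ _ => Ac.right) 0 St.s2 :=
                  (dval_right_s2 ε H 0 (by omega)).symm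
              _ ≤ dval nxt (rew ε) H (fun _ _ => Ac.left) 0 St.s2 := hmax ⟨0, by omega⟩
              _ = 0 := dval_left_s2 ε H 0
          linarith
        · exfalso
          have habs : ε ≤ (0 : ℝ) := by
            calc ε = dval nxt (rew ε) H (fun _ _ => Ac.right) 0 St.s2 :=
                  (dval_right_s2 ε H 0 (by omega)).symm
              _ ≤ dval nxt (rew ε) H (fun _ _ => Ac.up) 0 St.s2 := hmax ⟨0, by omega⟩
              _ = 0 := dval_up_s2 ε H (H - 0) 0 le_rfl
          linarith
      rw [dval, if_pos (by omega : 0 < H), hact]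
      rw [show nxt St.s2 Ac.right = St.s3 from rfl,
        dval_s3 ε H π (H - 1) 1 (by omega)]
      show ε + 0 ≤ ε
      linarith
    · refine ⟨fun h _ => if h = 0 then Ac.left else Ac.up, ?_⟩
      rw [dval, if_pos (by omega : 0 < H)]
      show rew ε St.s2 Ac.left + dval nxt (rew ε) H
        (fun h _ => if h = 0 then Ac.left else Ac.up) 1 St.s1 = (H : ℝ) - 2
      rw [dval, if_pos (by omega : 1 < H)]
      show (0 : ℝ) + ((0 : ℝ) + dval nxt (rew ε) H
        (fun h _ => if h = 0 then Ac.left else Ac.up) 2 St.s4) = (H : ℝ) - 2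
      rw [dval_s4 ε H _ (H - 2) 2 le_rfl (by omega)]
      push_cast; ring
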